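/- Let K be an imaginary quadratic number field with ring of integers O_K. Then for every complex number α not in K, there exist infinitely many pairs (a,q) with a, q in O_K and q nonzero such that |α - a/q| ≤ C/N(q), where N(q) is the absolute norm of q and C is a constant depending only on K. -/

import Mathlib

open NumberField

lemma normlem (K : Type*) [Field K] [NumberField K]
    (hdeg : Module.finrank ℚ K = 2)
    (ι : K →+* ℂ) (him : ∃ x : K, (ι x).im ≠ 0) (y : K) :
    ((Algebra.norm ℚ y : ℚ) : ℝ) = ‖ι y‖ ^ 2 := by
  classical
  obtain ⟨x, hx⟩ := him
  set σ₁ : K →ₐ[ℚ] ℂ := ι.toRatAlgHom with hσ₁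
  set σ₂ : K →ₐ[ℚ] ℂ := (((starRingEnd ℂ) : ℂ →+* ℂ).comp ι).toRatAlgHom with hσ₂
  have happ₁ : ∀ z : K, σ₁ z = ι z := fun z => rfl
  have happ₂ : ∀ z : K, σ₂ z = (starRingEnd ℂ) (ι z) := fun z => rfl
  have hne : σ₁ ≠ σ₂ := by
    intro h
    have h2 : (σ₁ x).im = (σ₂ x).im := by rw [h]
    rw [happ₁, happ₂, Complex.conj_im] at h2
    exact hx (by linarith)
  have hcard : Fintype.card (K →ₐ[ℚ] ℂ) = 2 := by
    rw [AlgHom.card]; exact hdeg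
  have huniv : (Finset.univ : Finset (K →ₐ[ℚ] ℂ)) = {σ₁, σ₂} := by
    symm
    apply Finset.eq_of_subset_of_card_le (Finset.subset_univ _)
    rw [Finset.card_univ, hcard, Finset.card_insert_of_notMem (by simpa using hne),
      Finset.card_singleton]
  have hprod := Algebra.norm_eq_prod_embeddings ℚ ℂ y
  rw [huniv, Finset.prod_pair hne, happ₁, happ₂] at hprod
  have hC : ((Algebra.norm ℚ y : ℚ) : ℂ) = ι y * (starRingEnd ℂ) (ι y) := by
    simpa using hprod
  rw [Complex.mul_conj] at hC
  have h2 : ((Algebra.norm ℚ y : ℚ) : ℝ) = Complex.normSq (ι y) := by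
    exact_mod_cast hC
  rw [h2, Complex.sq_norm]

lemma keylem (β : ℂ) (hβ : β.im ≠ 0) (α : ℂ) (N : ℕ) (hN : 0 < N) :
    ∃ m n k l : ℤ, ¬(m = 0 ∧ n = 0) ∧ |m| ≤ N ∧ |n| ≤ N ∧
      ‖((m : ℂ) + (n : ℂ) * β) * α - ((k : ℂ) + (l : ℂ) * β)‖
        ≤ (1 + ‖β‖) / N := by
  classical
  set cu : ℂ → ℝ := fun z => z.re - z.im / β.im * β.re with hcu
  set cv : ℂ → ℝ := fun z => z.im / β.im with hcv
  have hrepr : ∀ z : ℂ, z = (cu z : ℝ) + (cv z : ℝ) * β := by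
    intro z
    apply Complex.ext <;> simp [hcu, hcv] <;> field_simp
  set z : ℤ × ℤ → ℂ := fun p => ((p.1 : ℂ) + (p.2 : ℂ) * β) * α with hz
  set F : ℤ × ℤ → ℤ × ℤ := fun p =>
    (⌊(N : ℝ) * Int.fract (cu (z p))⌋, ⌊(N : ℝ) * Int.fract (cv (z p))⌋) with hF
  set D : Finset (ℤ × ℤ) := Finset.Icc (0:ℤ) N ×ˢ Finset.Icc (0:ℤ) N with hD
  set T : Finset (ℤ × ℤ) := Finset.Ico (0:ℤ) N ×ˢ Finset.Ico (0:ℤ) N with hT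
  have hcard : T.card < D.card := by
    simp only [hD, hT, Finset.card_product, Int.card_Icc, Int.card_Ico, sub_zero]
    have h1 : ((N : ℤ) + 1 - 0).toNat = N + 1 := by omega
    have h2 : ((N : ℤ)).toNat = N := by omega
    rw [h2, show ((N:ℤ)+1).toNat = N + 1 by omega]
    nlinarith
  have hmaps : ∀ p ∈ D, F p ∈ T := by
    intro p _
    simp only [hF, hT, Finset.mem_product, Finset.mem_Ico]
    have hfr1 : (0:ℝ) ≤ (N : ℝ) * Int.fract (cu (z p)) :=
      mul_nonneg (Nat.cast_nonneg N) (Int.fract_nonneg _)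
    have hfr2 : (0:ℝ) ≤ (N : ℝ) * Int.fract (cv (z p)) :=
      mul_nonneg (Nat.cast_nonneg N) (Int.fract_nonneg _)
    have hlt1 : (N : ℝ) * Int.fract (cu (z p)) < N := by
      nlinarith [Int.fract_lt_one (cu (z p)), (by exact_mod_cast hN : (0:ℝ) < N)]
    have hlt2 : (N : ℝ) * Int.fract (cv (z p)) < N := by
      nlinarith [Int.fract_lt_one (cv (z p)), (by exact_mod_cast hN : (0:ℝ) < N)]
    refine ⟨⟨Int.floor_nonneg.mpr hfr1, ?_⟩, Int.floor_nonneg.mpr hfr2, ?_⟩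
    · exact Int.floor_lt.mpr (by exact_mod_cast hlt1)
    · exact Int.floor_lt.mpr (by exact_mod_cast hlt2)
  obtain ⟨p, hp, p', hp', hne, hFeq⟩ :=
    Finset.exists_ne_map_eq_of_card_lt_of_maps_to hcard hmaps
  have hNR : (0:ℝ) < N := by exact_mod_cast hN
  -- fract differences
  have key : ∀ (x y : ℝ), ⌊(N:ℝ) * Int.fract x⌋ = ⌊(N:ℝ) * Int.fract y⌋ →
      |Int.fract x - Int.fract y| ≤ 1 / N := by
    intro x y h
    have h1 := Int.abs_sub_lt_one_of_floor_eq_floor h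
    rw [← mul_sub, abs_mul, abs_of_nonneg hNR.le] at h1
    rw [le_div_iff₀ hNR]
    nlinarith [abs_nonneg (Int.fract x - Int.fract y)]
  have hF1 : (F p).1 = (F p').1 := by rw [hFeq]
  have hF2 : (F p).2 = (F p').2 := by rw [hFeq]
  have hu := key _ _ hF1
  have hv := key _ _ hF2
  refine ⟨p.1 - p'.1, p.2 - p'.2, ⌊cu (z p)⌋ - ⌊cu (z p')⌋, ⌊cv (z p)⌋ - ⌊cv (z p')⌋,
    ?_, ?_, ?_, ?_⟩
  · rintro ⟨h1, h2⟩
    exact hne (Prod.ext (by omega) (by omega))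
  · simp only [hD, Finset.mem_product, Finset.mem_Icc] at hp hp'
    rw [abs_le]; omega
  · simp only [hD, Finset.mem_product, Finset.mem_Icc] at hp hp'
    rw [abs_le]; omega
  · have hid : ((p.1 - p'.1 : ℤ) : ℂ) + ((p.2 - p'.2 : ℤ) : ℂ) * β =
        ((p.1 : ℂ) + (p.2 : ℂ) * β) - ((p'.1 : ℂ) + (p'.2 : ℂ) * β) := by
      push_cast; ring
    have hzz : (((p.1 - p'.1 : ℤ) : ℂ) + ((p.2 - p'.2 : ℤ) : ℂ) * β) * α
        - ((⌊cu (z p)⌋ - ⌊cu (z p')⌋ : ℤ) + ((⌊cv (z p)⌋ - ⌊cv (z p')⌋ : ℤ) : ℂ) * β)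
        = ((Int.fract (cu (z p)) - Int.fract (cu (z p')) : ℝ) : ℂ)
          + ((Int.fract (cv (z p)) - Int.fract (cv (z p')) : ℝ) : ℂ) * β := by
      rw [hid, sub_mul]
      have e1 := hrepr (z p)
      have e2 := hrepr (z p')
      simp only [hz] at e1 e2
      rw [e1, e2]
      simp only [Int.fract]
      push_cast
      ring
    rw [hzz]
    calc ‖((Int.fract (cu (z p)) - Int.fract (cu (z p')) : ℝ) : ℂ)
          + ((Int.fract (cv (z p)) - Int.fract (cv (z p')) : ℝ) : ℂ) * β‖
        ≤ ‖((Int.fract (cu (z p)) - Int.fract (cu (z p')) : ℝ) : ℂ)‖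
          + ‖((Int.fract (cv (z p)) - Int.fract (cv (z p')) : ℝ) : ℂ) * β‖ :=
          norm_add_le _ _
      _ = |Int.fract (cu (z p)) - Int.fract (cu (z p'))|
          + |Int.fract (cv (z p)) - Int.fract (cv (z p'))| * ‖β‖ := by
          rw [norm_mul, Complex.norm_real, Complex.norm_real, Real.norm_eq_abs, Real.norm_eq_abs]
      _ ≤ 1 / N + (1 / N) * ‖β‖ := by
          gcongr <;> first | exact norm_nonneg β | exact hu | exact hv
      _ = (1 + ‖β‖) / N := by ring

lemma omegalem (K : Type*) [Field K] [NumberField K]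
    (ι : K →+* ℂ) (him : ∃ x : K, (ι x).im ≠ 0) :
    ∃ ω : 𝓞 K, (ι (ω : K)).im ≠ 0 := by
  by_contra h
  push_neg at h
  obtain ⟨x, hx⟩ := him
  obtain ⟨a, b, hb, hab⟩ := IsFractionRing.div_surjective (A := 𝓞 K) x
  apply hx
  rw [← hab, map_div₀]
  have ha' : (ι ((algebraMap (𝓞 K) K) a)).im = 0 := h a
  have hb' : (ι ((algebraMap (𝓞 K) K) b)).im = 0 := h b
  rw [Complex.div_im, ha', hb']
  simp

/-- Dirichlet approximation in imaginary quadratic number fields. -/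
theorem stmt0 (K : Type*) [Field K] [NumberField K]
    (hdeg : Module.finrank ℚ K = 2)
    (ι : K →+* ℂ) (him : ∃ x : K, (ι x).im ≠ 0) :
    ∃ C : ℝ, 0 < C ∧ ∀ α : ℂ, α ∉ Set.range ι →
      {aq : 𝓞 K × 𝓞 K | aq.2 ≠ 0 ∧
        ‖α - ι (aq.1 : K) / ι (aq.2 : K)‖ ≤
          C / ((Algebra.norm ℤ aq.2).natAbs : ℝ)}.Infinite := by
  classical
  obtain ⟨ω, hω⟩ := omegalem K ι him
  set β : ℂ := ι (ω : K) with hβdef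
  set b : ℝ := ‖β‖ with hbdef
  have hb0 : 0 ≤ b := norm_nonneg β
  refine ⟨(1 + b) ^ 2, by positivity, ?_⟩
  intro α hα
  set S : Set (𝓞 K × 𝓞 K) := {aq : 𝓞 K × 𝓞 K | aq.2 ≠ 0 ∧
      ‖α - ι (aq.1 : K) / ι (aq.2 : K)‖ ≤
        (1 + b) ^ 2 / ((Algebra.norm ℤ aq.2).natAbs : ℝ)} with hSdef
  have hι : ∀ (m n : ℤ), ι ((((m : 𝓞 K) + (n : 𝓞 K) * ω : 𝓞 K) : K)) = (m : ℂ) + (n : ℂ) * β := by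
    intro m n
    push_cast
    simp [hβdef]
  have hqzero : ∀ m n : ℤ, ((m : 𝓞 K) + (n : 𝓞 K) * ω) = 0 → m = 0 ∧ n = 0 := by
    intro m n h
    have h2 : (m : ℂ) + (n : ℂ) * β = 0 := by
      rw [← hι m n, h]
      simp
    have him0 : ((m : ℂ) + (n : ℂ) * β).im = (n : ℝ) * β.im := by
      simp [Complex.add_im, Complex.mul_im]
    rw [h2] at him0
    have hn : n = 0 := by
      by_contra hn0
      have : (n : ℝ) ≠ 0 := Int.cast_ne_zero.mpr hn0
      exact hω (by
        simp at him0
        tauto)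
    subst hn
    simp at h2
    exact ⟨by exact_mod_cast h2, rfl⟩
  have hcoene : ∀ q : 𝓞 K, q ≠ 0 → ι (q : K) ≠ 0 := by
    intro q hq
    have h1 : (q : K) ≠ 0 := RingOfIntegers.coe_ne_zero_iff.mpr hq
    exact fun h => h1 (ι.injective (by simpa using h))
  have hne0 : ∀ a q : 𝓞 K, q ≠ 0 → ι (q : K) * α - ι (a : K) ≠ 0 := by
    intro a q hq h0
    apply hα
    refine ⟨(a : K) / (q : K), ?_⟩
    rw [map_div₀, div_eq_iff (hcoene q hq)]
    linear_combination -h0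
  -- norm formula
  have hnorm : ∀ q : 𝓞 K, ((Algebra.norm ℤ q).natAbs : ℝ) = ‖ι (q : K)‖ ^ 2 := by
    intro q
    have h1 := normlem K hdeg ι him (q : K)
    rw [← Algebra.coe_norm_int] at h1
    rw [Nat.cast_natAbs, Int.cast_abs,
      show ((Algebra.norm ℤ q : ℤ) : ℝ) = ‖ι (q : K)‖ ^ 2 from by exact_mod_cast h1]
    exact abs_of_nonneg (by positivity)
  -- main construction
  have hmain : ∀ N : ℕ, 0 < N → ∃ p : 𝓞 K × 𝓞 K, p ∈ S ∧
      ‖ι (p.2 : K) * α - ι (p.1 : K)‖ ≤ (1 + b) / N := by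
    intro N hN
    obtain ⟨m, n, k, l, hmn, hm, hn, habs⟩ := keylem β hω α N hN
    set q : 𝓞 K := (m : 𝓞 K) + (n : 𝓞 K) * ω with hqdef
    set a : 𝓞 K := (k : 𝓞 K) + (l : 𝓞 K) * ω with hadef
    have hq : q ≠ 0 := fun h0 => hmn (hqzero m n h0)
    have hιq : ι (q : K) = (m : ℂ) + (n : ℂ) * β := hι m n
    have hιa : ι (a : K) = (k : ℂ) + (l : ℂ) * β := hι k l
    have hqC : ι (q : K) ≠ 0 := hcoene q hq
    have hQpos : 0 < ‖ι (q : K)‖ := norm_pos_iff.mpr hqC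
    have hNR : (0:ℝ) < N := by exact_mod_cast hN
    have habsq : ‖ι (q : K)‖ ≤ N * (1 + b) := by
      rw [hιq]
      calc ‖(m : ℂ) + (n : ℂ) * β‖
          ≤ ‖(m : ℂ)‖ + ‖(n : ℂ) * β‖ := norm_add_le _ _
        _ = |(m : ℝ)| + |(n : ℝ)| * b := by
            rw [norm_mul, Complex.norm_intCast, Complex.norm_intCast, hbdef]
        _ ≤ (N : ℝ) + (N : ℝ) * b := by
            have hm' : |(m : ℝ)| ≤ N := by exact_mod_cast hm
            have hn' : |(n : ℝ)| ≤ N := by exact_mod_cast hn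
            gcongr
        _ = N * (1 + b) := by ring
    have hkey : ‖ι (q : K) * α - ι (a : K)‖ ≤ (1 + b) / N := by
      rw [hιq, hιa]; exact habs
    refine ⟨(a, q), ⟨hq, ?_⟩, hkey⟩
    have hrw : α - ι (a : K) / ι (q : K) = (ι (q : K) * α - ι (a : K)) / ι (q : K) := by
      field_simp
    rw [hrw, norm_div, hnorm q]
    rw [div_le_div_iff₀ hQpos (by positivity)]
    have h5 : ‖ι (q : K) * α - ι (a : K)‖ * ‖ι (q : K)‖
        ≤ ((1 + b) / N) * (N * (1 + b)) :=
      mul_le_mul hkey habsq hQpos.le (by positivity)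
    have h6 : ((1 + b) / N) * (N * (1 + b)) = (1 + b) ^ 2 := by
      field_simp
    nlinarith [mul_le_mul_of_nonneg_right (h5.trans_eq h6) hQpos.le]
  -- infinitude
  by_contra hinf
  have hfin := Set.not_infinite.mp hinf
  set φ : 𝓞 K × 𝓞 K → ℝ := fun p => ‖ι (p.2 : K) * α - ι (p.1 : K)‖ with hφ
  have hposS : ∀ p ∈ S, 0 < φ p := by
    rintro ⟨a, q⟩ ⟨hq, -⟩
    exact norm_pos_iff.mpr (hne0 a q hq)
  have hSne : S.Nonempty := by
    obtain ⟨p, hp, -⟩ := hmain 1 one_pos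
    exact ⟨p, hp⟩
  have hFsne : (hfin.toFinset.image φ).Nonempty :=
    Finset.image_nonempty.mpr (Set.Finite.toFinset_nonempty hfin |>.mpr hSne)
  set ε : ℝ := (hfin.toFinset.image φ).min' hFsne with hε
  have hεpos : 0 < ε := by
    have hmem := (hfin.toFinset.image φ).min'_mem hFsne
    rw [Finset.mem_image] at hmem
    obtain ⟨p, hp, hpe⟩ := hmem
    rw [hε, ← hpe]
    exact hposS p (hfin.mem_toFinset.mp hp)
  obtain ⟨N, hNgt⟩ := exists_nat_gt ((1 + b) / ε)
  have hN0 : 0 < N := by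
    have : (0:ℝ) < N := lt_trans (by positivity) hNgt
    exact_mod_cast this
  have hNR : (0:ℝ) < N := by exact_mod_cast hN0
  obtain ⟨p, hpS, hpb⟩ := hmain N hN0
  have h1 : ε ≤ φ p :=
    Finset.min'_le _ _ (Finset.mem_image_of_mem φ (hfin.mem_toFinset.mpr hpS))
  have h2 : (1 + b) / N < ε := by
    rw [div_lt_iff₀ hNR]
    rw [div_lt_iff₀ hεpos] at hNgt
    linarith
  have : φ p ≤ (1 + b) / N := hpb
  linarith
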